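/- A symmetric map δ : X×X → Υ on a finite set X with |X| ≥ 2 is a symbolic ultrametric if and only if for every strong module M of δ with |M| ≥ 2, the quotient map δ|M / Mmax(δ|M) is complete (equivalently, the modular decomposition tree of δ has no prime vertex). -/

import Mathlib

/-- `M` is a module of `δ` relative to the ground set `A`: `M ⊆ A` and all elements
of `M` have the same `δ`-relation to every element of `A ∖ M`.  (For `A = Set.univ`
this is the usual notion of a module of `δ`; for general `A` it is the notion of a
module of the restriction `δ|A`.) -/
def IsModuleOn {X Υ : Type*} (δ : X → X → Υ) (A M : Set X) : Prop :=
  M ⊆ A ∧ ∀ x ∈ M, ∀ y ∈ M, ∀ z ∈ A \ M, δ x z = δ y z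

/-- `M` is a strong module of `δ` relative to the ground set `A`: a module that does
not overlap any other module, i.e. `M ∩ M' ∈ {M, M', ∅}` for every module `M'`. -/
def IsStrongModuleOn {X Υ : Type*} (δ : X → X → Υ) (A M : Set X) : Prop :=
  IsModuleOn δ A M ∧
  ∀ M', IsModuleOn δ A M' → M ∩ M' = M ∨ M ∩ M' = M' ∨ M ∩ M' = ∅

/-- `Mmax δ A`: the set of inclusion-maximal strong modules of `δ|A` that are proper
subsets of the ground set `A`. -/
def Mmax {X Υ : Type*} (δ : X → X → Υ) (A : Set X) : Set (Set X) :=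
  {M | IsStrongModuleOn δ A M ∧ M ≠ A ∧
    ∀ M', IsStrongModuleOn δ A M' → M' ≠ A → M ⊆ M' → M' = M}

/-- The quotient map `δ|A / Mmax(δ|A)` is complete: it assigns the same label to every
pair of distinct elements of `Mmax δ A` (labels being read off via representatives,
which is well-defined for disjoint modules). -/
def QuotientComplete {X Υ : Type*} (δ : X → X → Υ) (A : Set X) : Prop :=
  ∀ M ∈ Mmax δ A, ∀ N ∈ Mmax δ A, ∀ M' ∈ Mmax δ A, ∀ N' ∈ Mmax δ A,
    M ≠ N → M' ≠ N' →
    ∀ x ∈ M, ∀ y ∈ N, ∀ x' ∈ M', ∀ y' ∈ N', δ x y = δ x' y'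

/-- The quotient map `δ|A / Mmax(δ|A)` is prime: every module `𝒮` of the quotient map
(a set of elements of `Mmax δ A` all of whose members have the same quotient label to
each member of `Mmax δ A` outside `𝒮`, labels read off via representatives) is
trivial, i.e. empty, everything, or a singleton. -/
def QuotientPrime {X Υ : Type*} (δ : X → X → Υ) (A : Set X) : Prop :=
  ∀ 𝒮 ⊆ Mmax δ A,
    (∀ M ∈ 𝒮, ∀ M' ∈ 𝒮, ∀ N ∈ Mmax δ A \ 𝒮,
      ∀ x ∈ M, ∀ x' ∈ M', ∀ z ∈ N, δ x z = δ x' z) →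
    𝒮 = ∅ ∨ 𝒮 = Mmax δ A ∨ ∃ M, 𝒮 = {M}

/-- `δ` is a symbolic ultrametric: a symmetric map satisfying
(U1) there is no 4-element subset `{x,y,u,v}` with
`δ(x,y) = δ(y,u) = δ(u,v) ≠ δ(y,v) = δ(x,v) = δ(x,u)`, and
(U2) `|{δ(x,y), δ(x,z), δ(y,z)}| ≤ 2` for all distinct `x, y, z`. -/
def SymbolicUltrametric {X Υ : Type*} (δ : X → X → Υ) : Prop :=
  (¬ ∃ x y u v : X, x ≠ y ∧ x ≠ u ∧ x ≠ v ∧ y ≠ u ∧ y ≠ v ∧ u ≠ v ∧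
      δ x y = δ y u ∧ δ y u = δ u v ∧ δ y v = δ x v ∧ δ x v = δ x u ∧
      δ x y ≠ δ y v) ∧
  (∀ x y z : X, x ≠ y → x ≠ z → y ≠ z →
    ({δ x y, δ x z, δ y z} : Set Υ).ncard ≤ 2)


section Aux

variable {X Υ : Type*} {δ : X → X → Υ} {A : Set X}

/-- The ground set is a strong module of itself. -/
lemma self_strong : IsStrongModuleOn δ A A := by
  refine ⟨⟨subset_rfl, fun x _ y _ z hz => absurd hz.1 hz.2⟩, fun M' hM' => ?_⟩
  exact Or.inr (Or.inl (Set.inter_eq_right.2 hM'.1))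

/-- Singletons are strong modules. -/
lemma singleton_strong {x : X} (hx : x ∈ A) : IsStrongModuleOn δ A {x} := by
  refine ⟨⟨Set.singleton_subset_iff.2 hx, ?_⟩, fun M' _ => ?_⟩
  · rintro a rfl b rfl z _; rfl
  · by_cases h : x ∈ M'
    · exact Or.inl (Set.inter_eq_left.2 (Set.singleton_subset_iff.2 h))
    · refine Or.inr (Or.inr ?_)
      ext a; simp only [Set.mem_inter_iff, Set.mem_singleton_iff, Set.mem_empty_iff_false,
        iff_false, not_and]
      rintro rfl; exact h

/-- Distinct elements of `Mmax` are disjoint. -/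
lemma mmax_disjoint {P Q : Set X} (hP : P ∈ Mmax δ A) (hQ : Q ∈ Mmax δ A) (hne : P ≠ Q) :
    P ∩ Q = ∅ := by
  rcases hP.1.2 Q hQ.1.1 with h | h | h
  · exact absurd (hP.2.2 Q hQ.1 hQ.2.1 (by rw [← h]; exact Set.inter_subset_right))
      (fun e => hne.symm e)
  · exact absurd (hQ.2.2 P hP.1 hP.2.1 (by rw [← h]; exact Set.inter_subset_left)) hne
  · exact h

/-- Every proper strong module is contained in a maximal proper strong module. -/
lemma exists_mmax_superset [Finite X] {N : Set X} (hN : IsStrongModuleOn δ A N)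
    (hNA : N ≠ A) : ∃ P ∈ Mmax δ A, N ⊆ P := by
  set C : Set (Set X) := {P | IsStrongModuleOn δ A P ∧ P ≠ A ∧ N ⊆ P} with hC
  have hfin : C.Finite := Set.toFinite C
  have hne : C.Nonempty := ⟨N, hN, hNA, subset_rfl⟩
  obtain ⟨P, hPC, hmax⟩ : ∃ P ∈ C, ∀ M' ∈ C, id P ≤ id M' → id P = id M' := by
    obtain ⟨P, hP⟩ := hfin.exists_maximal hne
    exact ⟨P, hP.1, fun M' hM' h => le_antisymm h (hP.2 hM' h)⟩
  refine ⟨P, ⟨hPC.1, hPC.2.1, fun M' hM' hM'A hPM' => ?_⟩, hPC.2.2⟩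
  exact (hmax M' ⟨hM', hM'A, hPC.2.2.trans hPM'⟩ hPM').symm

/-- Every element of the ground set lies in some maximal proper strong module. -/
lemma mem_mmax_cover [Finite X] (h2 : 2 ≤ A.ncard) {x : X} (hx : x ∈ A) :
    ∃ P ∈ Mmax δ A, x ∈ P := by
  have hxA : ({x} : Set X) ≠ A := by
    rintro rfl
    simp [Set.ncard_singleton] at h2
  obtain ⟨P, hP, hsub⟩ := exists_mmax_superset (singleton_strong hx) hxA
  exact ⟨P, hP, hsub rfl⟩

/-- A strong module of a strong module is a strong module. -/
lemma strong_trans {M N : Set X} (hM : IsStrongModuleOn δ Set.univ M)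
    (hN : IsStrongModuleOn δ M N) : IsStrongModuleOn δ Set.univ N := by
  have hNM : N ⊆ M := hN.1.1
  constructor
  · refine ⟨Set.subset_univ N, fun x hx y hy z hz => ?_⟩
    by_cases hzM : z ∈ M
    · exact hN.1.2 x hx y hy z ⟨hzM, hz.2⟩
    · exact hM.1.2 x (hNM hx) y (hNM hy) z ⟨trivial, hzM⟩
  · intro M' hM'
    have hK : IsModuleOn δ M (M ∩ M') := by
      refine ⟨Set.inter_subset_left, fun x hx y hy z hz => ?_⟩
      exact hM'.2 x hx.2 y hy.2 z ⟨trivial, fun hzM' => hz.2 ⟨hz.1, hzM'⟩⟩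
    have hNK : N ∩ M' = N ∩ (M ∩ M') := by
      rw [Set.inter_comm M M', ← Set.inter_assoc,
        Set.inter_eq_left.2 (Set.inter_subset_left.trans hNM : N ∩ M' ⊆ M)]
    rcases hN.2 (M ∩ M') hK with h | h | h
    · exact Or.inl (by rw [hNK, h])
    · have hNM' : N ∩ M' = M ∩ M' := by rw [hNK, h]
      rcases hM.2 M' hM' with h2 | h2 | h2
      · have hMN : M ⊆ N := by
          rw [h2] at hNM'; rw [← hNM']; exact Set.inter_subset_left
        have : N = M := le_antisymm hNM hMN
        exact Or.inl (by rw [hNM', h2, this])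
      · exact Or.inr (Or.inl (by rw [hNM', h2]))
      · exact Or.inr (Or.inr (by rw [hNM', h2]))
    · exact Or.inr (Or.inr (by rw [hNK, h]))

end Aux

section ClaimA


variable {X Υ : Type*} {δ : X → X → Υ}

private lemma hset {p q r : Υ} (h : ({p, q, r} : Set Υ).ncard ≤ 2) (hpr : p ≠ r)
    (hqr : q ≠ r) : p = q := by
  by_contra hpq
  have : ({p, q, r} : Set Υ).ncard = 3 := Set.ncard_eq_three.2 ⟨p, q, r, hpq, hpr, hqr, rfl⟩
  omega

private lemma hset2 {p q r : Υ} (h : ({p, q, r} : Set Υ).ncard ≤ 2) (hpq : p ≠ q) :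
    r = p ∨ r = q := by
  by_contra hr
  push_neg at hr
  have : ({p, q, r} : Set Υ).ncard = 3 :=
    Set.ncard_eq_three.2 ⟨p, q, r, hpq, hr.1.symm, hr.2.symm, rfl⟩
  omega

/-- Claim A: for a symbolic ultrametric on a finite ground set `A` with `|A| ≥ 2`,
some label `k` disconnects `A`: there is a nontrivial split of `A` with all
cross-pairs labelled `k`. -/
lemma claimA [Fintype X] (hsym : ∀ x y : X, x ≠ y → δ x y = δ y x)
    (hU : SymbolicUltrametric δ) :
    ∀ n : ℕ, ∀ A : Set X, A.ncard = n → 2 ≤ n →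
      ∃ k, ∃ B : Set X, B ⊆ A ∧ B.Nonempty ∧ (A \ B).Nonempty ∧
        ∀ x ∈ B, ∀ y ∈ A \ B, δ x y = k := by
  intro n
  induction n using Nat.strong_induction_on with
  | _ n ih =>
    intro A hA h2
    rcases eq_or_lt_of_le h2 with h2' | h3
    · -- base case |A| = 2
      obtain ⟨a, b, hab, hAab⟩ := Set.ncard_eq_two.1 (by rw [hA, ← h2'])
      refine ⟨δ a b, {a}, ?_, ⟨a, rfl⟩, ⟨b, ?_⟩, ?_⟩
      · rw [hAab]; exact fun x hx => Or.inl hx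
      · refine ⟨by rw [hAab]; exact Or.inr rfl, fun h => hab.symm h⟩
      · intro x hx y hy
        have hx' : x = a := hx
        have hy' : y = b := by
          rcases (hAab ▸ hy.1 : y ∈ ({a, b} : Set X)) with h | h
          · exact absurd h hy.2
          · exact h
        rw [hx', hy']
    · -- inductive step, |A| = n ≥ 3
      have hAne : A.Nonempty := Set.nonempty_of_ncard_ne_zero (by omega)
      obtain ⟨v, hv⟩ := hAne
      have hB'card : (A \ {v}).ncard = n - 1 := by
        rw [Set.ncard_diff_singleton_of_mem hv, hA]
      obtain ⟨k, D, hDB', hDne, hDcne, hcross⟩ :=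
        ih (n - 1) (by omega) (A \ {v}) hB'card (by omega)
      set B' := A \ {v} with hB'def
      have hvB' : v ∉ B' := fun h => h.2 rfl
      have hDA : D ⊆ A := hDB'.trans Set.diff_subset
      have hmemB' : ∀ {y : X}, y ∈ B' → y ∈ A ∧ y ≠ v := fun hy =>
        ⟨hy.1, fun e => hy.2 (by rw [e]; rfl)⟩
      by_cases h1 : ∀ b ∈ D, δ v b = k
      · refine ⟨k, D, hDA, hDne, ⟨v, hv, fun hvD => hvB' (hDB' hvD)⟩, ?_⟩
        intro x hx y hy
        by_cases hyv : y = v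
        · have hxv : x ≠ v := (hmemB' (hDB' hx)).2
          rw [hyv, hsym x v hxv]; exact h1 x hx
        · exact hcross x hx y ⟨⟨hy.1, by simp [hyv]⟩, hy.2⟩
      · by_cases h2c : ∀ b ∈ B' \ D, δ v b = k
        · obtain ⟨d, hd⟩ := hDne
          refine ⟨k, B' \ D, Set.diff_subset.trans Set.diff_subset,
            hDcne, ⟨d, hDA hd, fun h => h.2 hd⟩, ?_⟩
          intro x hx y hy
          have hxv : x ≠ v := (hmemB' hx.1).2
          by_cases hyv : y = v
          · rw [hyv, hsym x v hxv]; exact h2c x hx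
          · have hyB' : y ∈ B' := ⟨hy.1, by simp [hyv]⟩
            have hyD : y ∈ D := by
              by_contra hyD; exact hy.2 ⟨hyB', hyD⟩
            have hxy : x ≠ y := fun e => hx.2 (e ▸ hyD)
            rw [hsym x y hxy]; exact hcross y hyD x hx
        · push_neg at h1 h2c
          obtain ⟨b1, hb1D, hb1k⟩ := h1
          obtain ⟨b2, hb2m, hb2k⟩ := h2c
          have hb1B' : b1 ∈ B' := hDB' hb1D
          have hb2B' : b2 ∈ B' := hb2m.1
          have hvb1 : v ≠ b1 := fun e => (hmemB' hb1B').2 e.symm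
          have hvb2 : v ≠ b2 := fun e => (hmemB' hb2B').2 e.symm
          set l := δ v b1 with hl
          -- all non-k values of δ v · on B' are equal to l
          have hstep : ∀ b ∈ D, δ v b ≠ k → ∀ c ∈ B' \ D, δ v c ≠ k → δ v b = δ v c := by
            intro b hb hbk c hc hck
            have hbc : b ≠ c := fun e => hc.2 (e ▸ hb)
            have hvb : v ≠ b := fun e => (hmemB' (hDB' hb)).2 e.symm
            have hvc : v ≠ c := fun e => (hmemB' hc.1).2 e.symm
            have h3 := hU.2 v b c hvb hvc hbc
            have hk : δ b c = k := hcross b hb c hc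
            exact hset h3 (fun e => hbk (e.trans hk)) (fun e => hck (e.trans hk))
          have hval : ∀ b ∈ B', δ v b ≠ k → δ v b = l := by
            intro b hbB' hbk
            by_cases hbD : b ∈ D
            · exact (hstep b hbD hbk b2 hb2m hb2k).trans (hstep b1 hb1D hb1k b2 hb2m hb2k).symm
            · exact (hstep b1 hb1D hb1k b ⟨hbB', hbD⟩ hbk).symm
          have hlk : l ≠ k := hb1k
          -- key: non-k neighbours of v have label k to k-neighbours of v
          have hW : ∀ w ∈ B', δ v w ≠ k → ∀ b ∈ B', δ v b = k → δ w b = k := by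
            intro w hw hwk b hb hbk
            have hwb : w ≠ b := fun e => hwk (e ▸ hbk)
            have hvw : v ≠ w := fun e => (hmemB' hw).2 e.symm
            have hvb : v ≠ b := fun e => (hmemB' hb).2 e.symm
            have hwl : δ v w = l := hval w hw hwk
            by_cases hwD : w ∈ D
            · by_cases hbD : b ∈ D
              · -- both in D: use witness b2 on the other side
                have h3 := hU.2 v w b hvw hvb hwb
                rcases hset2 h3 (by rw [hwl, hbk]; exact hlk) with hm | hm
                · exfalso
                  have hb2w : b2 ≠ w := fun e => hb2m.2 (by rw [e]; exact hwD)
                  have hb2b : b2 ≠ b := fun e => hb2m.2 (by rw [e]; exact hbD)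
                  have e1 : δ b2 v = δ v w :=
                    (hsym b2 v hvb2.symm).trans ((hval b2 hb2B' hb2k).trans hwl.symm)
                  have e3 : δ b2 b = k := (hsym b2 b hb2b).trans (hcross b hbD b2 hb2m)
                  have e4 : δ b2 w = k := (hsym b2 w hb2w).trans (hcross w hwD b2 hb2m)
                  refine hU.1 ⟨b2, v, w, b, hvb2.symm, hb2w, hb2b, hvw, hvb, hwb,
                    e1, hm.symm, hbk.trans e3.symm, e3.trans e4.symm, ?_⟩
                  rw [e1, hwl, hbk]; exact hlk
                · exact hm.trans hbk
              · exact hcross w hwD b ⟨hb, hbD⟩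
            · by_cases hbD : b ∈ D
              · rw [hsym w b hwb]; exact hcross b hbD w ⟨hw, hwD⟩
              · have h3 := hU.2 v w b hvw hvb hwb
                rcases hset2 h3 (by rw [hwl, hbk]; exact hlk) with hm | hm
                · exfalso
                  have hb1w : b1 ≠ w := fun e => hwD (e ▸ hb1D)
                  have hb1b : b1 ≠ b := fun e => hbD (e ▸ hb1D)
                  have e1 : δ b1 v = δ v w := (hsym b1 v hvb1.symm).trans (hl ▸ hwl.symm)
                  have e3 : δ b1 b = k := hcross b1 hb1D b ⟨hb, hbD⟩
                  have e4 : δ b1 w = k := hcross b1 hb1D w ⟨hw, hwD⟩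
                  refine hU.1 ⟨b1, v, w, b, hvb1.symm, hb1w, hb1b, hvw, hvb, hwb,
                    e1, hm.symm, hbk.trans e3.symm, e3.trans e4.symm, ?_⟩
                  rw [e1, hwl, hbk]; exact hlk
                · exact hm.trans hbk
          by_cases hall : ∀ b ∈ B', δ v b ≠ k
          · refine ⟨l, {v}, Set.singleton_subset_iff.2 hv, ⟨v, rfl⟩,
              ⟨b1, (hmemB' hb1B').1, fun h => (hmemB' hb1B').2 h⟩, ?_⟩
            intro x hx y hy
            have hx' : x = v := hx
            subst hx'
            exact hval y hy (hall y hy)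
          · push_neg at hall
            obtain ⟨b0, hb0B', hb0k⟩ := hall
            refine ⟨k, insert v {w ∈ B' | δ v w ≠ k}, ?_, ⟨v, Set.mem_insert _ _⟩,
              ⟨b0, (hmemB' hb0B').1, ?_⟩, ?_⟩
            · intro x hx
              rcases hx with rfl | hx
              · exact hv
              · exact (hmemB' hx.1).1
            · rintro (rfl | hx)
              · exact (hmemB' hb0B').2 rfl
              · exact hx.2 hb0k
            · intro x hx y hy
              have hyv : y ≠ v := fun e => hy.2 (e ▸ Set.mem_insert _ _)
              have hyB' : y ∈ B' := ⟨hy.1, by simp [hyv]⟩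
              have hyk : δ v y = k := by
                by_contra hyk
                exact hy.2 (Set.mem_insert_of_mem _ ⟨hyB', hyk⟩)
              rcases hx with rfl | hx
              · exact hyk
              · exact hW x hx.1 hx.2 y hyB' hyk

end ClaimA

section Complete

variable {X Υ : Type*} {δ : X → X → Υ}

/-- Forward direction: a symbolic ultrametric has complete quotients on every
ground set with at least two elements. -/
lemma quotientComplete_of_ultrametric [Fintype X]
    (hsym : ∀ x y : X, x ≠ y → δ x y = δ y x) (hU : SymbolicUltrametric δ)
    (A : Set X) (h2 : 2 ≤ A.ncard) : QuotientComplete δ A := by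
  obtain ⟨k, B, hBA, hBne, hBcne, hcross⟩ := claimA hsym hU A.ncard A rfl h2
  -- the reachability relation via non-k edges inside A
  set r : X → X → Prop := fun x y => x ∈ A ∧ y ∈ A ∧ x ≠ y ∧ δ x y ≠ k with hr
  have hrsymm : Symmetric r := by
    rintro x y ⟨hx, hy, hxy, hk⟩
    exact ⟨hy, hx, hxy.symm, fun e => hk (by rw [hsym x y hxy, e])⟩
  set Reach := Relation.ReflTransGen r with hReach
  have hReachA : ∀ {x y : X}, x ∈ A → Reach x y → y ∈ A := by
    intro x y hx h
    induction h with
    | refl => exact hx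
    | tail _ h2 ih => exact h2.2.1
  have hReachsymm : ∀ {x y : X}, Reach x y → Reach y x :=
    fun h => by
      haveI : Std.Symm r := ⟨fun a b h => hrsymm h⟩
      exact Relation.ReflTransGen.symmetric.symm _ _ h
  -- components
  set C : X → Set X := fun x => {y | Reach x y} with hCdef
  have hCsub : ∀ {x : X}, x ∈ A → C x ⊆ A := fun hx y hy => hReachA hx hy
  have hCk : ∀ {x : X}, x ∈ A → ∀ y ∈ C x, ∀ z ∈ A \ C x, δ y z = k := by
    intro x hx y hy z hz
    by_contra hzk
    have hyz : y ≠ z := fun e => hz.2 (e ▸ hy)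
    have : Reach x z := Relation.ReflTransGen.tail hy ⟨hCsub hx hy, hz.1, hyz, hzk⟩
    exact hz.2 this
  -- components respect the B-split, hence are proper
  have hCne : ∀ {x : X}, x ∈ A → C x ≠ A := by
    intro x hx hCA
    have hside : ∀ {a b : X}, Reach a b → (a ∈ B → b ∈ B) ∧ (a ∈ A \ B → b ∈ A \ B) := by
      intro a b h
      induction h with
      | refl => exact ⟨id, id⟩
      | @tail b' c' _ h2 ih =>
        constructor
        · intro ha
          have hb' := ih.1 ha
          by_contra hc'
          exact h2.2.2.2 (hcross b' hb' c' ⟨h2.2.1, hc'⟩)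
        · intro ha
          have hb' := ih.2 ha
          by_contra hc'
          have hc'B : c' ∈ B := by
            by_contra h'
            exact hc' ⟨h2.2.1, h'⟩
          exact h2.2.2.2 (by
            rw [hsym _ _ h2.2.2.1]
            exact hcross c' hc'B b' hb')
    obtain ⟨p, hp⟩ := hBne
    obtain ⟨q, hq⟩ := hBcne
    by_cases hxB : x ∈ B
    · have : q ∈ C x := hCA ▸ hq.1
      exact hq.2 ((hside this).1 hxB)
    · have : p ∈ C x := hCA ▸ hBA hp
      exact ((hside this).2 ⟨hx, hxB⟩).2 hp
  -- each component is a module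
  have hCmod : ∀ {x : X}, x ∈ A → IsModuleOn δ A (C x) := by
    intro x hx
    exact ⟨hCsub hx, fun a ha b hb z hz => (hCk hx a ha z hz).trans (hCk hx b hb z hz).symm⟩
  -- each component is a strong module
  have hCstrong : ∀ {x : X}, x ∈ A → IsStrongModuleOn δ A (C x) := by
    intro x hx
    refine ⟨hCmod hx, fun M' hM' => ?_⟩
    by_cases hem : C x ∩ M' = ∅
    · exact Or.inr (Or.inr hem)
    obtain ⟨a, haC, haM⟩ := Set.nonempty_iff_ne_empty.2 hem
    by_cases hsub : C x ⊆ M'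
    · exact Or.inl (Set.inter_eq_left.2 hsub)
    obtain ⟨b, hbC, hbM⟩ := Set.not_subset.1 hsub
    -- find an r-edge exiting M' inside the component
    have hab : Reach a b := Relation.ReflTransGen.trans (hReachsymm haC) hbC
    have hexit : ∀ b'', Reach a b'' → b'' ∉ M' → ∃ u w, Reach a u ∧ u ∈ M' ∧ w ∉ M' ∧ r u w := by
      intro b'' hb''
      induction hb'' with
      | refl => exact fun h => absurd haM h
      | @tail p q h1 h2 ih =>
        intro hq
        by_cases hpM : p ∈ M'
        · exact ⟨p, q, h1, hpM, hq, h2⟩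
        · exact ih hpM
    obtain ⟨u, w, hau, huM, hwM, huw⟩ := hexit b hab hbM
    have huC : u ∈ C x := Relation.ReflTransGen.trans haC hau
    have hwC : w ∈ C x := Relation.ReflTransGen.tail huC huw
    -- now every element of M' is in the component
    have hM'C : M' ⊆ C x := by
      intro c hcM
      by_contra hcC
      have hcA : c ∈ A := hM'.1 hcM
      have h1 : δ u w = δ c w := hM'.2 u huM c hcM w ⟨huw.2.1, hwM⟩
      have h2 : δ c w = k := by
        by_contra hck
        have hcw : c ≠ w := fun e => hcC (e ▸ hwC)
        have : Reach x c :=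
          Relation.ReflTransGen.tail hwC (hrsymm ⟨hcA, huw.2.1, hcw, hck⟩)
        exact hcC this
      exact huw.2.2.2 (h1.trans h2)
    exact Or.inr (Or.inl (Set.inter_eq_right.2 hM'C))
  -- cross-part values are all k
  have hcrosspart : ∀ M ∈ Mmax δ A, ∀ N ∈ Mmax δ A, M ≠ N →
      ∀ x ∈ M, ∀ y ∈ N, δ x y = k := by
    intro M hM N hN hMN x hx y hy
    have hxA : x ∈ A := hM.1.1.1 hx
    have hyA : y ∈ A := hN.1.1.1 hy
    have hdisj := mmax_disjoint hM hN hMN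
    have hxy : x ≠ y := by
      rintro rfl
      exact absurd (Set.eq_empty_iff_forall_notMem.1 hdisj x ⟨hx, hy⟩) not_false
    by_contra hk
    have hyC : y ∈ C x := Relation.ReflTransGen.single ⟨hxA, hyA, hxy, hk⟩
    obtain ⟨P, hP, hCP⟩ := exists_mmax_superset (hCstrong hxA) (hCne hxA)
    have hMP : M = P := by
      by_contra hne
      exact Set.eq_empty_iff_forall_notMem.1 (mmax_disjoint hM hP hne) x
        ⟨hx, hCP (Relation.ReflTransGen.refl)⟩
    have hNP : N = P := by
      by_contra hne
      exact Set.eq_empty_iff_forall_notMem.1 (mmax_disjoint hN hP hne) y ⟨hy, hCP hyC⟩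
    exact hMN (hMP.trans hNP.symm)
  intro M hM N hN M' hM' N' hN' hMN hM'N' x hx y hy x' hx' y' hy'
  rw [hcrosspart M hM N hN hMN x hx y hy, hcrosspart M' hM' N' hN' hM'N' x' hx' y' hy']

end Complete

section Main

variable {X Υ : Type*} {δ : X → X → Υ}

private lemma ncard_le_two {p q r : Υ} (h : p = q ∨ p = r ∨ q = r) :
    ({p, q, r} : Set Υ).ncard ≤ 2 := by
  have hle : ∀ a b : Υ, ({a, b} : Set Υ).ncard ≤ 2 := fun a b =>
    (Set.ncard_insert_le _ _).trans (by simp)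
  rcases h with h | h | h
  · subst h
    have e : ({p, p, r} : Set Υ) = {p, r} := by
      ext t; simp only [Set.mem_insert_iff, Set.mem_singleton_iff]; tauto
    rw [e]; exact hle _ _
  · subst h
    have e : ({p, q, p} : Set Υ) = {p, q} := by
      ext t; simp only [Set.mem_insert_iff, Set.mem_singleton_iff]; tauto
    rw [e]; exact hle _ _
  · subst h
    have e : ({p, q, q} : Set Υ) = {p, q} := by
      ext t; simp only [Set.mem_insert_iff, Set.mem_singleton_iff]; tauto
    rw [e]; exact hle _ _

/-- Existence of a minimal strong module containing a given set. -/
lemma exists_min_strong [Fintype X] (δ : X → X → Υ) (S : Set X) :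
    ∃ M, IsStrongModuleOn δ Set.univ M ∧ S ⊆ M ∧
      ∀ M', IsStrongModuleOn δ Set.univ M' → S ⊆ M' → M' ⊆ M → M' = M := by
  set C : Set (Set X) := {M | IsStrongModuleOn δ Set.univ M ∧ S ⊆ M} with hC
  have hfin : C.Finite := Set.toFinite C
  have hne : C.Nonempty := ⟨Set.univ, self_strong, Set.subset_univ S⟩
  obtain ⟨M, hMC, hmin⟩ : ∃ M ∈ C, ∀ M' ∈ C, id M' ≤ id M → id M = id M' := by
    obtain ⟨M, hM⟩ := hfin.exists_minimal hne
    exact ⟨M, hM.1, fun M' hM' h => le_antisymm (hM.2 hM' h) h⟩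
  exact ⟨M, hMC.1, hMC.2, fun M' h1 h2 h3 => (hmin M' ⟨h1, h2⟩ h3).symm⟩

private lemma stmt_13_aux [Fintype X] (h2 : 2 ≤ Fintype.card X)
    (δ : X → X → Υ) (hsym : ∀ x y : X, x ≠ y → δ x y = δ y x) :
    SymbolicUltrametric δ ↔
      ∀ M : Set X, IsStrongModuleOn δ Set.univ M → 2 ≤ M.ncard →
        QuotientComplete δ M := by
  constructor
  · intro hU M _ h2M
    exact quotientComplete_of_ultrametric hsym hU M h2M
  · intro H
    constructor
    · -- (U1)
      rintro ⟨x, y, u, v, hxy, hxu, hxv, hyu, hyv, huv, e1, e2, e3, e4, hne⟩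
      obtain ⟨M, hM, hSM, hmin⟩ := exists_min_strong δ {x, y, u, v}
      have hxM : x ∈ M := hSM (by simp)
      have hyM : y ∈ M := hSM (by simp)
      have huM : u ∈ M := hSM (by simp)
      have hvM : v ∈ M := hSM (by simp)
      have h2M : 2 ≤ M.ncard := (Set.one_lt_ncard_iff (Set.toFinite M)).2 ⟨x, y, hxM, hyM, hxy⟩
      have hQC : QuotientComplete δ M := H M hM h2M
      obtain ⟨Px, hPx, hxPx⟩ := mem_mmax_cover h2M hxM
      obtain ⟨Py, hPy, hyPy⟩ := mem_mmax_cover h2M hyM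
      obtain ⟨Pv, hPv, hvPv⟩ := mem_mmax_cover h2M hvM
      have hnotall : ∀ P ∈ Mmax δ M, x ∈ P → y ∈ P → u ∈ P → v ∈ P → False := by
        intro P hP h1 h2 h3 h4
        have hPs : IsStrongModuleOn δ Set.univ P := strong_trans hM hP.1
        have hsub : ({x, y, u, v} : Set X) ⊆ P := by
          rintro t (rfl | rfl | rfl | rfl) <;> assumption
        exact hP.2.1 (hmin P hPs hsub hP.1.1.1)
      have hmod : ∀ P ∈ Mmax δ M, ∀ p ∈ P, ∀ q ∈ P, ∀ t ∈ M, t ∉ P → δ p t = δ q t :=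
        fun P hP p hp q hq t htM htP => hP.1.1.2 p hp q hq t ⟨htM, htP⟩
      -- a part containing x and y contains everything (contradiction)
      have keyxy : ∀ P ∈ Mmax δ M, x ∈ P → y ∈ P → False := by
        intro P hP hxP hyP
        have huP : u ∈ P := by
          by_contra huP
          have hm := hmod P hP x hxP y hyP u huM huP
          exact hne (((e1.trans hm.symm).trans e4.symm).trans e3.symm)
        have hvP : v ∈ P := by
          by_contra hvP
          have hm := hmod P hP x hxP u huP v hvM hvP
          exact hne (((e1.trans e2).trans hm.symm).trans e3.symm)
        exact hnotall P hP hxP hyP huP hvP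
      have keyxv : ∀ P ∈ Mmax δ M, x ∈ P → v ∈ P → False := by
        intro P hP hxP hvP
        have hyP : y ∈ P := by
          by_contra hyP
          have hm := hmod P hP x hxP v hvP y hyM hyP
          exact hne (hm.trans (hsym v y hyv.symm))
        exact keyxy P hP hxP hyP
      have hPxPy : Px ≠ Py := fun e => keyxy Px hPx hxPx (e.symm ▸ hyPy)
      have hPxPv : Px ≠ Pv := fun e => keyxv Px hPx hxPx (e.symm ▸ hvPv)
      have := hQC Px hPx Py hPy Px hPx Pv hPv hPxPy hPxPv x hxPx y hyPy x hxPx v hvPv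
      exact hne (this.trans e3.symm)
    · -- (U2)
      intro x y z hxy hxz hyz
      obtain ⟨M, hM, hSM, hmin⟩ := exists_min_strong δ {x, y, z}
      have hxM : x ∈ M := hSM (by simp)
      have hyM : y ∈ M := hSM (by simp)
      have hzM : z ∈ M := hSM (by simp)
      have h2M : 2 ≤ M.ncard := (Set.one_lt_ncard_iff (Set.toFinite M)).2 ⟨x, y, hxM, hyM, hxy⟩
      have hQC : QuotientComplete δ M := H M hM h2M
      obtain ⟨Px, hPx, hxPx⟩ := mem_mmax_cover h2M hxM
      obtain ⟨Py, hPy, hyPy⟩ := mem_mmax_cover h2M hyM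
      obtain ⟨Pz, hPz, hzPz⟩ := mem_mmax_cover h2M hzM
      have hnotall : ∀ P ∈ Mmax δ M, x ∈ P → y ∈ P → z ∈ P → False := by
        intro P hP h1 h2 h3
        have hPs : IsStrongModuleOn δ Set.univ P := strong_trans hM hP.1
        have hsub : ({x, y, z} : Set X) ⊆ P := by
          rintro t (rfl | rfl | rfl) <;> assumption
        exact hP.2.1 (hmin P hPs hsub hP.1.1.1)
      have hmod : ∀ P ∈ Mmax δ M, ∀ p ∈ P, ∀ q ∈ P, ∀ t ∈ M, t ∉ P → δ p t = δ q t :=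
        fun P hP p hp q hq t htM htP => hP.1.1.2 p hp q hq t ⟨htM, htP⟩
      by_cases exy : Px = Py
      · have hzPx : z ∉ Px := fun h => hnotall Px hPx hxPx (exy.symm ▸ hyPy) h
        have hm := hmod Px hPx x hxPx y (exy.symm ▸ hyPy) z hzM hzPx
        exact ncard_le_two (Or.inr (Or.inr hm))
      by_cases exz : Px = Pz
      · have hyPx : y ∉ Px := fun h => hnotall Px hPx hxPx h (exz.symm ▸ hzPz)
        have hm := hmod Px hPx x hxPx z (exz.symm ▸ hzPz) y hyM hyPx
        exact ncard_le_two (Or.inr (Or.inl (hm.trans (hsym z y hyz.symm))))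
      by_cases eyz : Py = Pz
      · have hxPy : x ∉ Py := fun h => hnotall Py hPy h hyPy (eyz.symm ▸ hzPz)
        have hm := hmod Py hPy y hyPy z (eyz.symm ▸ hzPz) x hxM hxPy
        exact ncard_le_two (Or.inl ((hsym x y hxy).trans (hm.trans (hsym z x hxz.symm))))
      · have := hQC Px hPx Py hPy Px hPx Pz hPz exy exz x hxPx y hyPy x hxPx z hzPz
        exact ncard_le_two (Or.inl this)

end Main

/-- A symmetric map `δ` on a finite set `X` with `|X| ≥ 2` is a symbolic
ultrametric iff for every strong module `M` of `δ` with `|M| ≥ 2`, the quotient map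
`δ|M / Mmax(δ|M)` is complete (i.e. the modular decomposition tree of `δ` has no prime
vertex). -/
theorem stmt_13 {X Υ : Type*} [Fintype X] (h2 : 2 ≤ Fintype.card X)
    (δ : X → X → Υ) (hsym : ∀ x y : X, x ≠ y → δ x y = δ y x) :
    SymbolicUltrametric δ ↔
      ∀ M : Set X, IsStrongModuleOn δ Set.univ M → 2 ≤ M.ncard →
        QuotientComplete δ M := by
  exact stmt_13_aux h2 δ hsym
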